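/- Let P(x) and Q(x) be monic palindromic polynomials over ℤ[λ^{±1}, μ^{±1}, α₁,…, β₁,…] of degrees d and e: P(x) = (1+x^d) + α₁(x+x^{d−1}) + ⋯ and Q(x) = (1+x^e) + β₁(x+x^{e−1}) + ⋯. Define y₀, y₁ as indeterminates and y_k = μ² P(y_{k−1}/λ)/y_{k−2} for k odd, y_k = λ² Q(y_{k−1}/μ)/y_{k−2} for k even (k ≥ 2). Then every y_k is a Laurent polynomial in y₀, y₁ with coefficients in ℤ[λ^{±1}, μ^{±1}, α_i, β_j]. -/

import Mathlib

open Finset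

section helpers
variable {R : Type*} [CommRing R] {F : Type*} [Field F]

/-- Generic palindromic-style sum `∑ i, c i * a^i * b^(n-i)`. -/
def polyS (n : ℕ) (c : ℕ → R) (a b : R) : R :=
  ∑ i ∈ Finset.range (n+1), c i * a ^ i * b ^ (n - i)

lemma polyS_scale (n : ℕ) (c : ℕ → R) (a b u : R) :
    polyS n c (a*u) (b*u) = polyS n c a b * u ^ n := by
  unfold polyS
  rw [Finset.sum_mul]
  refine Finset.sum_congr rfl fun i hi => ?_
  have hi' : i ≤ n := Nat.lt_succ_iff.mp (Finset.mem_range.mp hi)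
  rw [mul_pow, mul_pow,
    show c i * (a^i*u^i) * (b^(n-i) * u^(n-i)) = c i * a^i * b^(n-i) * (u^i * u^(n-i)) from by
      ring, ← pow_add, Nat.add_sub_cancel' hi']

lemma polyS_reflect (n : ℕ) (c : ℕ → R) (a b : R) (hpal : ∀ i ≤ n, c (n - i) = c i) :
    polyS n c a b = polyS n c b a := by
  unfold polyS
  rw [← Finset.sum_range_reflect]
  refine Finset.sum_congr rfl fun i hi => ?_
  have hi' : i ≤ n := Nat.lt_succ_iff.mp (Finset.mem_range.mp hi)
  have h1 : n + 1 - 1 - i = n - i := by omega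
  rw [h1, hpal i hi', Nat.sub_sub_self hi']
  ring

lemma polyS_dvd (n : ℕ) (c : ℕ → R) (a a' b p : R) (h : p ∣ a - a') :
    p ∣ polyS n c a b - polyS n c a' b := by
  unfold polyS
  rw [← Finset.sum_sub_distrib]
  refine Finset.dvd_sum fun i _ => ?_
  have : c i * a ^ i * b ^ (n-i) - c i * a' ^ i * b ^ (n-i)
      = (a ^ i - a' ^ i) * (c i * b ^ (n-i)) := by ring
  rw [this]
  exact Dvd.dvd.mul_right (h.trans (sub_dvd_pow_sub_pow a a' i)) _

lemma polyS_pos (n : ℕ) (c : ℕ → R) (a b : R) (E : R →+* ℝ)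
    (hc : ∀ i, 0 ≤ E (c i)) (hcn : E (c n) = 1) (ha : 0 < E a) (hb : E b = 1) :
    0 < E (polyS n c a b) := by
  unfold polyS
  rw [map_sum]
  refine Finset.sum_pos' (fun i _ => ?_) ⟨n, Finset.self_mem_range_succ n, ?_⟩
  · rw [map_mul, map_mul, map_pow, map_pow, hb, one_pow, mul_one]
    exact mul_nonneg (hc i) (pow_nonneg ha.le i)
  · rw [map_mul, map_mul, map_pow, map_pow, hb, one_pow, mul_one, hcn, one_mul]
    exact pow_pos ha n

lemma polyS_sub_dvd (n : ℕ) (c : ℕ → R) (p b : R) (hc0 : c 0 = 1) :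
    p ∣ polyS n c p b - b ^ n := by
  unfold polyS
  rw [Finset.sum_range_succ']
  simp only [pow_zero, hc0, one_mul, Nat.sub_zero]
  rw [add_sub_cancel_right]
  refine Finset.dvd_sum fun i _ => ?_
  exact Dvd.dvd.mul_right (Dvd.dvd.mul_left (dvd_pow_self p (Nat.succ_ne_zero i)) _) _

/-- Goodness: `z` is `φ p / φ g ^ t` with positive real specialization of `p`. -/
def IsGood (φ : R →+* F) (E : R →+* ℝ) (g : R) (z : F) : Prop :=
  ∃ p : R, ∃ t : ℕ, z * φ g ^ t = φ p ∧ 0 < E p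

lemma IsGood.ne_zero {φ : R →+* F} (hφ : Function.Injective φ) {E : R →+* ℝ} {g : R}
    {z : F} (h : IsGood φ E g z) : z ≠ 0 := by
  obtain ⟨p, t, he, hp⟩ := h
  have hpne : p ≠ 0 := by rintro rfl; simp at hp
  have : φ p ≠ 0 := fun h0 => hpne (hφ (by simpa using h0))
  intro h0
  rw [h0, zero_mul] at he
  exact this he.symm

lemma Peval (φ : R →+* F) (d : ℕ) (c : ℕ → R) (P : F → F)
    (hP : ∀ t : F, P t = ∑ i ∈ Finset.range (d+1), φ (c i) * t ^ i)
    (z : F) (p w l : R) (hl : φ l ≠ 0) (hw : φ w ≠ 0)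
    (hz : z * φ w = φ p) :
    P (z / φ l) * φ (l * w) ^ d = φ (polyS d c p (l * w)) := by
  rw [hP, Finset.sum_mul]
  unfold polyS
  rw [map_sum]
  refine Finset.sum_congr rfl fun i hi => ?_
  have hi' : i ≤ d := Nat.lt_succ_iff.mp (Finset.mem_range.mp hi)
  have key : (z / φ l) * φ (l * w) = φ p := by
    rw [map_mul]
    rw [div_mul_eq_mul_div, mul_comm (φ l) (φ w), ← mul_assoc, hz]
    exact mul_div_cancel_right₀ _ hl
  have hsplit : (φ l * φ w) ^ d = (φ l * φ w) ^ i * (φ l * φ w) ^ (d - i) := by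
    rw [← pow_add, Nat.add_sub_cancel' hi']
  simp only [map_mul, map_pow]
  rw [hsplit]
  calc φ (c i) * (z / φ l) ^ i * ((φ l * φ w) ^ i * (φ l * φ w) ^ (d-i))
      = φ (c i) * ((z / φ l) * (φ l * φ w)) ^ i * (φ l * φ w) ^ (d-i) := by
        rw [mul_pow]; ring
    _ = φ (c i) * φ p ^ i * (φ l * φ w) ^ (d-i) := by rw [show (z / φ l) * (φ l * φ w) = φ p from by rw [← map_mul, key]]

end helpers

section core
variable {R : Type*} [CommRing R] {F : Type*} [Field F]

lemma dvd_ne_zero {φ : R →+* F} {a g : R} (h : a ∣ g) (hg : φ g ≠ 0) : φ a ≠ 0 := by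
  obtain ⟨r, hr⟩ := h
  intro h0
  rw [hr, map_mul, h0, zero_mul] at hg
  exact hg rfl

lemma core_base (φ : R →+* F) (E : R →+* ℝ)
    (g l m : R) (hlg : l ∣ g)
    (hEg : E g = 1) (hEl : E l = 1) (hEm : E m = 1)
    (hgf : φ g ≠ 0)
    (d : ℕ) (c : ℕ → R) (hcd : c d = 1) (hEc : ∀ i, 0 ≤ E (c i))
    (P : F → F)
    (hP : ∀ t : F, P t = ∑ i ∈ Finset.range (d+1), φ (c i) * t ^ i)
    (q : R) (hq : q ∣ g) (hEq : E q = 1)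
    (y0 y1 y2 : F) (h0 : y0 = φ q)
    (w1 : IsGood φ E g y1)
    (rel : y2 * y0 = φ m ^ 2 * P (y1 / φ l)) :
    IsGood φ E g y2 := by
  obtain ⟨p1, t1, h1, e1⟩ := w1
  have hlf : φ l ≠ 0 := dvd_ne_zero hlg hgf
  have hqf : φ q ≠ 0 := dvd_ne_zero hq hgf
  have hgt : ∀ t : ℕ, φ (g ^ t) ≠ 0 := fun t => by
    rw [map_pow]; exact pow_ne_zero _ hgf
  have h1' : y1 * φ (g ^ t1) = φ p1 := by rw [map_pow]; exact h1
  have hPe1 := Peval φ d c P hP y1 p1 (g ^ t1) l hlf (hgt t1) h1'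
  obtain ⟨s, hs⟩ := hq
  obtain ⟨r, hr⟩ := hlg
  have hEs : E s = 1 := by
    have := congrArg E hs
    rw [map_mul, hEq, one_mul] at this
    rw [← this, hEg]
  have hEr : E r = 1 := by
    have := congrArg E hr
    rw [map_mul, hEl, one_mul] at this
    rw [← this, hEg]
  have hmbR : q * s * ((l * g ^ t1) ^ d * r ^ d) = g ^ (1 + d + t1*d) := by
    have h1'' : (l * g ^ t1) ^ d * r ^ d = ((l*r) * g ^ t1) ^ d := by
      rw [mul_pow, mul_pow (l*r) (g^t1) d]; ring
    rw [show 1 + d + t1*d = 1 + (t1+1)*d from by ring, pow_add, pow_mul, pow_one]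
    rw [h1'', ← hs, ← hr, pow_succ]
    ring
  refine ⟨m ^ 2 * polyS d c p1 (l * g ^ t1) * (s * r ^ d), 1 + d + t1*d, ?_, ?_⟩
  · apply mul_right_cancel₀ hqf
    have hmb := congrArg φ hmbR
    simp only [map_mul, map_pow] at hmb hPe1 ⊢
    linear_combination (-(y2 * φ g ^ (1 + d + t1*d))) * h0
      + (φ g ^ (1 + d + t1*d)) * rel
      + (φ m ^ 2 * P (y1 / φ l)) * hmb.symm
      + (φ m ^ 2 * φ q * φ s * φ r ^ d) * hPe1
  · have hEN : 0 < E (polyS d c p1 (l * g ^ t1)) := by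
      refine polyS_pos d c p1 (l * g ^ t1) E hEc (by rw [hcd, map_one]) e1 ?_
      rw [map_mul, map_pow, hEl, hEg, one_pow, one_mul]
    simp only [map_mul, map_pow, hEm, hEs, hEr, one_pow, one_mul, mul_one]
    exact hEN

set_option maxHeartbeats 1600000 in
lemma core_step (φ : R →+* F) (hφ : Function.Injective φ) (E : R →+* ℝ)
    (g l m : R) (hlg : l ∣ g) (hmg : m ∣ g)
    (hEg : E g = 1) (hEl : E l = 1) (hEm : E m = 1)
    (hgf : φ g ≠ 0)
    (d e : ℕ) (c c' : ℕ → R)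
    (hcd : c d = 1) (hc'0 : c' 0 = 1)
    (hpal : ∀ i ≤ d, c (d - i) = c i)
    (hEc : ∀ i, 0 ≤ E (c i))
    (P Q : F → F)
    (hP : ∀ t : F, P t = ∑ i ∈ Finset.range (d+1), φ (c i) * t ^ i)
    (hQ : ∀ t : F, Q t = ∑ i ∈ Finset.range (e+1), φ (c' i) * t ^ i)
    (y0 y1 y2 y3 y4 : F)
    (w0 : IsGood φ E g y0) (w1 : IsGood φ E g y1)
    (w2 : IsGood φ E g y2) (w3 : IsGood φ E g y3)
    (rel2 : y2 * y0 = φ m ^ 2 * P (y1 / φ l))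
    (rel3 : y3 * y1 = φ l ^ 2 * Q (y2 / φ m))
    (rel4 : y4 * y2 = φ m ^ 2 * P (y3 / φ l)) :
    IsGood φ E g y4 := by
  obtain ⟨p0, t0, h0, e0⟩ := w0
  obtain ⟨p1, t1, h1, e1⟩ := w1
  obtain ⟨p2, t2, h2, e2⟩ := w2
  obtain ⟨p3, t3, h3, e3⟩ := w3
  have hlf : φ l ≠ 0 := dvd_ne_zero hlg hgf
  have hmf : φ m ≠ 0 := dvd_ne_zero hmg hgf
  have hgt : ∀ t : ℕ, φ (g ^ t) ≠ 0 := fun t => by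
    rw [map_pow]; exact pow_ne_zero _ hgf
  have hp2ne : φ p2 ≠ 0 := by
    have : p2 ≠ 0 := by rintro rfl; simp at e2
    intro h'; exact this (hφ (by simpa using h'))
  have h1' : y1 * φ (g ^ t1) = φ p1 := by rw [map_pow]; exact h1
  have h2' : y2 * φ (g ^ t2) = φ p2 := by rw [map_pow]; exact h2
  have h3' : y3 * φ (g ^ t3) = φ p3 := by rw [map_pow]; exact h3
  have hPe1 := Peval φ d c P hP y1 p1 (g ^ t1) l hlf (hgt t1) h1'
  have hPe2 := Peval φ e c' Q hQ y2 p2 (g ^ t2) m hmf (hgt t2) h2'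
  have hPe3 := Peval φ d c P hP y3 p3 (g ^ t3) l hlf (hgt t3) h3'
  simp only [map_mul, map_pow] at hPe1 hPe2 hPe3
  -- R-level versions of rel2 and rel3
  have Eq2R : p2 * p0 * (l * g ^ t1) ^ d
      = m ^ 2 * polyS d c p1 (l * g ^ t1) * g ^ (t2 + t0) := by
    apply hφ
    simp only [map_mul, map_pow]
    linear_combination (φ p0 * (φ l * φ g ^ t1) ^ d) * h2.symm
      + (y2 * φ g ^ t2 * (φ l * φ g ^ t1) ^ d) * h0.symm
      + (φ g ^ t2 * φ g ^ t0 * (φ l * φ g ^ t1) ^ d) * rel2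
      + (φ m ^ 2 * φ g ^ t2 * φ g ^ t0) * hPe1
  have Eq3R : p3 * p1 * (m * g ^ t2) ^ e
      = l ^ 2 * polyS e c' p2 (m * g ^ t2) * g ^ (t3 + t1) := by
    apply hφ
    simp only [map_mul, map_pow]
    linear_combination (φ p1 * (φ m * φ g ^ t2) ^ e) * h3.symm
      + (y3 * φ g ^ t3 * (φ m * φ g ^ t2) ^ e) * h1.symm
      + (φ g ^ t3 * φ g ^ t1 * (φ m * φ g ^ t2) ^ e) * rel3
      + (φ l ^ 2 * φ g ^ t3 * φ g ^ t1) * hPe2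
  -- the congruence  p2 ∣ A - B
  have divAB : p2 ∣ p3 * (p1 * (m * g ^ t2) ^ e)
      - (l * g ^ t1) * ((m * g ^ t2) ^ e * (l * g ^ t3)) := by
    have hdM : p2 ∣ polyS e c' p2 (m * g ^ t2) - (m * g ^ t2) ^ e :=
      polyS_sub_dvd e c' p2 (m * g ^ t2) hc'0
    obtain ⟨w, hw⟩ := hdM
    refine ⟨l ^ 2 * w * g ^ (t3 + t1), ?_⟩
    linear_combination Eq3R + (l ^ 2 * g ^ (t3 + t1)) * hw
  -- scaled sums
  have key1 := polyS_scale d c p3 (l * g ^ t3) (p1 * (m * g ^ t2) ^ e)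
  rw [show (l * g ^ t3) * (p1 * (m * g ^ t2) ^ e)
      = p1 * ((m * g ^ t2) ^ e * (l * g ^ t3)) from by ring] at key1
  have key2 := polyS_scale d c (l * g ^ t1) p1 ((m * g ^ t2) ^ e * (l * g ^ t3))
  rw [polyS_reflect d c (l * g ^ t1) p1 hpal] at key2
  have div4 : p2 ∣ polyS d c (p3 * (p1 * (m * g ^ t2) ^ e)) (p1 * ((m * g ^ t2) ^ e * (l * g ^ t3)))
      - polyS d c ((l * g ^ t1) * ((m * g ^ t2) ^ e * (l * g ^ t3))) (p1 * ((m * g ^ t2) ^ e * (l * g ^ t3))) :=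
    polyS_dvd d c _ _ _ p2 divAB
  have div5 : p2 ∣ (p3 * (p1 * (m * g ^ t2) ^ e)) ^ d
      - ((l * g ^ t1) * ((m * g ^ t2) ^ e * (l * g ^ t3))) ^ d :=
    divAB.trans (sub_dvd_pow_sub_pow _ _ d)
  -- main divisibility
  have finalDvd : p2 ∣ m ^ 2 * g ^ (t2 + t0) * ((l * g ^ t1) * ((m * g ^ t2) ^ e * (l * g ^ t3))) ^ d
      * polyS d c p3 (l * g ^ t3) := by
    have decomp : m ^ 2 * g ^ (t2 + t0) * ((l * g ^ t1) * ((m * g ^ t2) ^ e * (l * g ^ t3))) ^ d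
          * polyS d c p3 (l * g ^ t3)
        = m ^ 2 * g ^ (t2 + t0)
            * (((l * g ^ t1) * ((m * g ^ t2) ^ e * (l * g ^ t3))) ^ d
                - (p3 * (p1 * (m * g ^ t2) ^ e)) ^ d)
            * polyS d c p3 (l * g ^ t3)
          + m ^ 2 * g ^ (t2 + t0) * p3 ^ d
            * (polyS d c (p3 * (p1 * (m * g ^ t2) ^ e)) (p1 * ((m * g ^ t2) ^ e * (l * g ^ t3)))
               - polyS d c ((l * g ^ t1) * ((m * g ^ t2) ^ e * (l * g ^ t3))) (p1 * ((m * g ^ t2) ^ e * (l * g ^ t3))))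
          + p3 ^ d * ((m * g ^ t2) ^ e * (l * g ^ t3)) ^ d * (p2 * (p0 * (l * g ^ t1) ^ d)) := by
      linear_combination (m ^ 2 * g ^ (t2 + t0) * p3 ^ d) * key1.symm
        + (m ^ 2 * g ^ (t2 + t0) * p3 ^ d) * key2
        + (p3 ^ d * ((m * g ^ t2) ^ e * (l * g ^ t3)) ^ d) * Eq2R.symm
    rw [decomp]
    refine dvd_add (dvd_add ?_ ?_) ?_
    · exact ((dvd_sub_comm.mp div5).mul_left _).mul_right _
    · exact div4.mul_left _
    · exact (dvd_mul_right p2 _).mul_left _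
  -- pass to a pure power of g
  have hBg : m ^ 2 * g ^ (t2 + t0) * ((l * g ^ t1) * ((m * g ^ t2) ^ e * (l * g ^ t3))) ^ d
      ∣ g ^ (2 + (t2 + t0) + (1 + t1 + ((1 + t2) * e + (1 + t3))) * d) := by
    have hl1 : l * g ^ t1 ∣ g ^ (1 + t1) := by
      rw [pow_add, pow_one]; exact mul_dvd_mul hlg dvd_rfl
    have hl3 : l * g ^ t3 ∣ g ^ (1 + t3) := by
      rw [pow_add, pow_one]; exact mul_dvd_mul hlg dvd_rfl
    have hm2 : m * g ^ t2 ∣ g ^ (1 + t2) := by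
      rw [pow_add, pow_one]; exact mul_dvd_mul hmg dvd_rfl
    have hme : (m * g ^ t2) ^ e ∣ g ^ ((1 + t2) * e) := by
      rw [pow_mul]; exact pow_dvd_pow_of_dvd hm2 e
    have hB : (l * g ^ t1) * ((m * g ^ t2) ^ e * (l * g ^ t3))
        ∣ g ^ (1 + t1 + ((1 + t2) * e + (1 + t3))) :=
      (mul_dvd_mul hl1 (mul_dvd_mul hme hl3)).trans
        (dvd_of_eq (by rw [← pow_add, ← pow_add]))
    calc m ^ 2 * g ^ (t2 + t0) * ((l * g ^ t1) * ((m * g ^ t2) ^ e * (l * g ^ t3))) ^ d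
        ∣ g ^ 2 * g ^ (t2 + t0) * (g ^ (1 + t1 + ((1 + t2) * e + (1 + t3)))) ^ d :=
          mul_dvd_mul (mul_dvd_mul (pow_dvd_pow_of_dvd hmg 2) dvd_rfl) (pow_dvd_pow_of_dvd hB d)
      _ = g ^ (2 + (t2 + t0) + (1 + t1 + ((1 + t2) * e + (1 + t3))) * d) := by
          rw [← pow_mul, ← pow_add, ← pow_add]
  have dvdKN : p2 ∣ g ^ (2 + (t2 + t0) + (1 + t1 + ((1 + t2) * e + (1 + t3))) * d)
      * polyS d c p3 (l * g ^ t3) :=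
    finalDvd.trans (mul_dvd_mul_right hBg _)
  obtain ⟨W, hW⟩ := dvdKN
  obtain ⟨r, hr⟩ := hlg
  have hEr : E r = 1 := by
    have := congrArg E hr
    rw [map_mul, hEl, one_mul] at this
    rw [← this, hEg]
  -- the new witness
  set K := 2 + (t2 + t0) + (1 + t1 + ((1 + t2) * e + (1 + t3))) * d with hK
  have hT4R : (l * g ^ t3) ^ d * (r ^ d * g ^ K) = g ^ (d + t3 * d + K) := by
    calc (l * g ^ t3) ^ d * (r ^ d * g ^ K) = ((l * r) * g ^ t3) ^ d * g ^ K := by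
          rw [mul_pow, mul_pow (l*r) (g^t3) d]; ring
      _ = (g * g ^ t3) ^ d * g ^ K := by rw [← hr]
      _ = g ^ (d + t3 * d + K) := by
          rw [show g * g ^ t3 = g ^ (1 + t3) from by rw [pow_add, pow_one],
            ← pow_mul, ← pow_add]
          congr 1; ring
  refine ⟨m ^ 2 * W * (g ^ t2 * r ^ d), d + t3 * d + K, ?_, ?_⟩
  · apply mul_right_cancel₀ hp2ne
    have hmb := congrArg φ hT4R
    have hmw := congrArg φ hW
    simp only [map_mul, map_pow] at hmb hmw ⊢
    linear_combination (y4 * φ p2) * hmb.symm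
      + (-(y4 * (φ l * φ g ^ t3) ^ d * φ r ^ d * φ g ^ K)) * h2
      + ((φ l * φ g ^ t3) ^ d * φ r ^ d * φ g ^ K * φ g ^ t2) * rel4
      + (φ m ^ 2 * φ r ^ d * φ g ^ K * φ g ^ t2) * hPe3
      + (φ m ^ 2 * φ r ^ d * φ g ^ t2) * hmw
  · have hEN : 0 < E (polyS d c p3 (l * g ^ t3)) := by
      refine polyS_pos d c p3 (l * g ^ t3) E hEc (by rw [hcd, map_one]) e3 ?_
      rw [map_mul, map_pow, hEl, hEg, one_pow, one_mul]
    have hEW : 0 < E W := by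
      have hEq := congrArg E hW
      rw [map_mul, map_mul, map_pow, hEg, one_pow, one_mul] at hEq
      nlinarith [hEN, e2, hEq]
    simp only [map_mul, map_pow, hEm, hEr, hEg, one_pow, one_mul, mul_one]
    exact hEW

end core

open MvPolynomial

def PalinVars : Type := Fin 2 ⊕ Fin 2 ⊕ ℕ ⊕ ℕ

theorem palindromic_recurrence_laurent
    (d e : ℕ) (hd : 0 < d) (he : 0 < e)
    (F : Type*) [Field F] [Algebra (MvPolynomial PalinVars ℤ) F]
    [IsFractionRing (MvPolynomial PalinVars ℤ) F]
    (x : PalinVars → F)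
    (hx : ∀ s, x s = algebraMap (MvPolynomial PalinVars ℤ) F (X s))
    (lam mu : F) (hlam : lam = x (Sum.inl 0)) (hmu : mu = x (Sum.inl 1))
    (Y : Fin 2 → F) (hY : ∀ i, Y i = x (Sum.inr (Sum.inl i)))
    (A B : ℕ → F)
    (hA : ∀ k, A k = x (Sum.inr (Sum.inr (Sum.inl k))))
    (hB : ∀ k, B k = x (Sum.inr (Sum.inr (Sum.inr k))))
    (P Q : F → F)
    (hP : ∀ t : F, P t = ∑ i ∈ Finset.range (d + 1),
      (if i = 0 ∨ i = d then 1 else A (min i (d - i))) * t ^ i)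
    (hQ : ∀ t : F, Q t = ∑ i ∈ Finset.range (e + 1),
      (if i = 0 ∨ i = e then 1 else B (min i (e - i))) * t ^ i)
    (y : ℕ → F)
    (hy0 : y 0 = Y 0) (hy1 : y 1 = Y 1)
    (hodd : ∀ k : ℕ, Odd (k + 2) → y (k + 2) = mu ^ 2 * P (y (k + 1) / lam) / y k)
    (heven : ∀ k : ℕ, Even (k + 2) → y (k + 2) = lam ^ 2 * Q (y (k + 1) / mu) / y k) :
    ∀ k : ℕ, y k ∈ Algebra.adjoin ℤ
      (Set.range Y ∪ Set.range (fun i => (Y i)⁻¹)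
        ∪ {lam, lam⁻¹, mu, mu⁻¹} ∪ Set.range A ∪ Set.range B) := by
  set R := MvPolynomial PalinVars ℤ with hR
  set φ : R →+* F := (algebraMap R F : R →+* F) with hphi
  have hφ : Function.Injective φ := IsFractionRing.injective R F
  -- real specialization
  set wE : PalinVars → ℝ :=
    (Sum.elim (fun _ => (1:ℝ)) (Sum.elim (fun _ => (1:ℝ)) (fun _ => (0:ℝ))) :
      (Fin 2 ⊕ Fin 2 ⊕ ℕ ⊕ ℕ) → ℝ) with hwE
  set E : R →+* ℝ := (MvPolynomial.aeval (R := ℤ) wE).toRingHom with hE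
  -- the four distinguished variables
  set XL : R := X (Sum.inl 0) with hXL
  set XM : R := X (Sum.inl 1) with hXM
  set XU : R := X (Sum.inr (Sum.inl 0)) with hXU
  set XV : R := X (Sum.inr (Sum.inl 1)) with hXV
  set gR : R := XL * XM * (XU * XV) with hgR
  have hEX : ∀ s : PalinVars, E (X s) = wE s := fun s => by
    rw [hE]
    exact MvPolynomial.aeval_X (R := ℤ) (S₁ := ℝ) (f := wE) s
  have hEXL : E XL = 1 := by rw [hXL]; exact hEX _
  have hEXM : E XM = 1 := by rw [hXM]; exact hEX _
  have hEXU : E XU = 1 := by rw [hXU]; exact hEX _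
  have hEXV : E XV = 1 := by rw [hXV]; exact hEX _
  have hEg : E gR = 1 := by
    rw [hgR, map_mul, map_mul, map_mul, hEXL, hEXM, hEXU, hEXV]; norm_num
  have hXne : ∀ s : PalinVars, φ (X s) ≠ 0 := fun s h => by
    have h0 : X s = (0 : R) := hφ (by rw [h, map_zero])
    exact MvPolynomial.X_ne_zero s h0
  have hgf : φ gR ≠ 0 := by
    rw [hgR, map_mul, map_mul, map_mul]
    exact mul_ne_zero (mul_ne_zero (hXne _) (hXne _)) (mul_ne_zero (hXne _) (hXne _))
  have hLg : XL ∣ gR := ⟨XM * (XU * XV), by rw [hgR]; ring⟩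
  have hMg : XM ∣ gR := ⟨XL * (XU * XV), by rw [hgR]; ring⟩
  have hUg : XU ∣ gR := ⟨XL * XM * XV, by rw [hgR]; ring⟩
  have hVg : XV ∣ gR := ⟨XL * XM * XU, by rw [hgR]; ring⟩
  have hlam' : lam = φ XL := by rw [hlam, hXL]; exact hx _
  have hmu' : mu = φ XM := by rw [hmu, hXM]; exact hx _
  -- coefficient families
  set cP : ℕ → R := fun i =>
    if i = 0 ∨ i = d then 1 else X (Sum.inr (Sum.inr (Sum.inl (min i (d - i))))) with hcP
  set cQ : ℕ → R := fun i =>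
    if i = 0 ∨ i = e then 1 else X (Sum.inr (Sum.inr (Sum.inr (min i (e - i))))) with hcQ
  have hPc : ∀ t : F, P t = ∑ i ∈ Finset.range (d + 1), φ (cP i) * t ^ i := by
    intro t
    rw [hP t]
    refine Finset.sum_congr rfl fun i _ => ?_
    congr 1
    by_cases h : i = 0 ∨ i = d
    · simp [hcP, h]
    · simp only [hcP, if_neg h]
      rw [hA]; exact hx _
  have hQc : ∀ t : F, Q t = ∑ i ∈ Finset.range (e + 1), φ (cQ i) * t ^ i := by
    intro t
    rw [hQ t]
    refine Finset.sum_congr rfl fun i _ => ?_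
    congr 1
    by_cases h : i = 0 ∨ i = e
    · simp [hcQ, h]
    · simp only [hcQ, if_neg h]
      rw [hB]; exact hx _
  have hcP0 : cP 0 = 1 := by simp [hcP]
  have hcPd : cP d = 1 := by simp [hcP]
  have hcQ0 : cQ 0 = 1 := by simp [hcQ]
  have hcQe : cQ e = 1 := by simp [hcQ]
  have hpalP : ∀ i ≤ d, cP (d - i) = cP i := by
    intro i hi
    simp only [hcP]
    by_cases h : i = 0 ∨ i = d
    · have h' : d - i = 0 ∨ d - i = d := by omega
      rw [if_pos h', if_pos h]
    · have h' : ¬(d - i = 0 ∨ d - i = d) := by omega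
      rw [if_neg h', if_neg h, Nat.sub_sub_self hi, min_comm]
  have hpalQ : ∀ i ≤ e, cQ (e - i) = cQ i := by
    intro i hi
    simp only [hcQ]
    by_cases h : i = 0 ∨ i = e
    · have h' : e - i = 0 ∨ e - i = e := by omega
      rw [if_pos h', if_pos h]
    · have h' : ¬(e - i = 0 ∨ e - i = e) := by omega
      rw [if_neg h', if_neg h, Nat.sub_sub_self hi, min_comm]
  have hEcP : ∀ i, 0 ≤ E (cP i) := by
    intro i
    by_cases h : i = 0 ∨ i = d
    · simp [hcP, h]
    · simp only [hcP, if_neg h]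
      exact le_of_eq (Eq.symm ((hEX _).trans (by simp [hwE])))
  have hEcQ : ∀ i, 0 ≤ E (cQ i) := by
    intro i
    by_cases h : i = 0 ∨ i = e
    · simp [hcQ, h]
    · simp only [hcQ, if_neg h]
      exact le_of_eq (Eq.symm ((hEX _).trans (by simp [hwE])))
  -- base cases
  have hy0' : y 0 = φ XU := by rw [hy0, hY, hXU]; exact hx _
  have hy1' : y 1 = φ XV := by rw [hy1, hY, hXV]; exact hx _
  have good0 : IsGood φ E gR (y 0) := ⟨XU, 0, by simp [hy0'], by rw [hEXU]; norm_num⟩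
  have good1 : IsGood φ E gR (y 1) := ⟨XV, 0, by simp [hy1'], by rw [hEXV]; norm_num⟩
  have hy0ne : y 0 ≠ 0 := good0.ne_zero hφ
  have hy1ne : y 1 ≠ 0 := good1.ne_zero hφ
  have rel02 : y 2 * y 0 = φ XL ^ 2 * Q (y 1 / φ XM) := by
    rw [heven 0 (by decide), ← hlam', ← hmu']
    exact div_mul_cancel₀ _ hy0ne
  have good2 : IsGood φ E gR (y 2) :=
    core_base φ E gR XM XL hMg hEg hEXM hEXL hgf e cQ hcQe hEcQ Q hQc
      XU hUg hEXU (y 0) (y 1) (y 2) hy0' good1 rel02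
  have hy2ne : y 2 ≠ 0 := good2.ne_zero hφ
  have rel13 : y 3 * y 1 = φ XM ^ 2 * P (y 2 / φ XL) := by
    rw [hodd 1 (by decide), ← hlam', ← hmu']
    exact div_mul_cancel₀ _ hy1ne
  have good3 : IsGood φ E gR (y 3) :=
    core_base φ E gR XL XM hLg hEg hEXL hEXM hgf d cP hcPd hEcP P hPc
      XV hVg hEXV (y 1) (y 2) (y 3) hy1' good2 rel13
  -- the sliding window induction
  have key : ∀ n : ℕ, IsGood φ E gR (y n) ∧ IsGood φ E gR (y (n+1))
      ∧ IsGood φ E gR (y (n+2)) ∧ IsGood φ E gR (y (n+3)) := by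
    intro n
    induction n with
    | zero => exact ⟨good0, good1, good2, good3⟩
    | succ n ih =>
      obtain ⟨i0, i1, i2, i3⟩ := ih
      refine ⟨i1, i2, i3, ?_⟩
      show IsGood φ E gR (y (n+4))
      have hn0 : y n ≠ 0 := i0.ne_zero hφ
      have hn1 : y (n+1) ≠ 0 := i1.ne_zero hφ
      have hn2 : y (n+2) ≠ 0 := i2.ne_zero hφ
      rcases Nat.even_or_odd n with hn | hn
      · -- n even : n+2, n+4 even use Q ; n+3 odd uses P
        have he2 : Even (n+2) := by rcases hn with ⟨k, hk⟩; exact ⟨k+1, by omega⟩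
        have he4 : Even (n+4) := by rcases hn with ⟨k, hk⟩; exact ⟨k+2, by omega⟩
        have ho3 : Odd (n+3) := by rcases hn with ⟨k, hk⟩; exact ⟨k+1, by omega⟩
        have rel2 : y (n+2) * y n = φ XL ^ 2 * Q (y (n+1) / φ XM) := by
          rw [heven n he2, ← hlam', ← hmu']
          exact div_mul_cancel₀ _ hn0
        have rel3 : y (n+3) * y (n+1) = φ XM ^ 2 * P (y (n+2) / φ XL) := by
          rw [hodd (n+1) ho3, ← hlam', ← hmu']
          exact div_mul_cancel₀ _ hn1
        have rel4 : y (n+4) * y (n+2) = φ XL ^ 2 * Q (y (n+3) / φ XM) := by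
          rw [heven (n+2) he4, ← hlam', ← hmu']
          exact div_mul_cancel₀ _ hn2
        exact core_step φ hφ E gR XM XL hMg hLg hEg hEXM hEXL hgf e d cQ cP
          hcQe hcP0 hpalQ hEcQ Q P hQc hPc (y n) (y (n+1)) (y (n+2)) (y (n+3)) (y (n+4))
          i0 i1 i2 i3 rel2 rel3 rel4
      · -- n odd : n+2, n+4 odd use P ; n+3 even uses Q
        have ho2 : Odd (n+2) := by rcases hn with ⟨k, hk⟩; exact ⟨k+1, by omega⟩
        have ho4 : Odd (n+4) := by rcases hn with ⟨k, hk⟩; exact ⟨k+2, by omega⟩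
        have he3 : Even (n+3) := by rcases hn with ⟨k, hk⟩; exact ⟨k+2, by omega⟩
        have rel2 : y (n+2) * y n = φ XM ^ 2 * P (y (n+1) / φ XL) := by
          rw [hodd n ho2, ← hlam', ← hmu']
          exact div_mul_cancel₀ _ hn0
        have rel3 : y (n+3) * y (n+1) = φ XL ^ 2 * Q (y (n+2) / φ XM) := by
          rw [heven (n+1) he3, ← hlam', ← hmu']
          exact div_mul_cancel₀ _ hn1
        have rel4 : y (n+4) * y (n+2) = φ XM ^ 2 * P (y (n+3) / φ XL) := by
          rw [hodd (n+2) ho4, ← hlam', ← hmu']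
          exact div_mul_cancel₀ _ hn2
        exact core_step φ hφ E gR XL XM hLg hMg hEg hEXL hEXM hgf d e cP cQ
          hcPd hcQ0 hpalP hEcP P Q hPc hQc (y n) (y (n+1)) (y (n+2)) (y (n+3)) (y (n+4))
          i0 i1 i2 i3 rel2 rel3 rel4
  -- conclusion : membership in the adjoined subalgebra
  intro k
  obtain ⟨p, t, hpt, -⟩ := (key k).1
  set G : Set F := Set.range Y ∪ Set.range (fun i => (Y i)⁻¹)
      ∪ {lam, lam⁻¹, mu, mu⁻¹} ∪ Set.range A ∪ Set.range B with hG
  set S : Subalgebra ℤ F := Algebra.adjoin ℤ G with hS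
  have hmemx : ∀ s : Fin 2 ⊕ Fin 2 ⊕ ℕ ⊕ ℕ, x s ∈ S := by
    rintro (i | i | i | i)
    · fin_cases i
      · exact Algebra.subset_adjoin (by show x (Sum.inl 0) ∈ G; rw [← hlam]; simp [hG])
      · exact Algebra.subset_adjoin (by show x (Sum.inl 1) ∈ G; rw [← hmu]; simp [hG])
    · exact Algebra.subset_adjoin (by rw [← hY i]; simp [hG])
    · exact Algebra.subset_adjoin (by rw [← hA i]; simp [hG])
    · exact Algebra.subset_adjoin (by rw [← hB i]; simp [hG])
  have hmemp : ∀ q : R, φ q ∈ S := by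
    intro q
    induction q using MvPolynomial.induction_on with
    | C a =>
      rw [show (MvPolynomial.C a : R) = algebraMap ℤ R a from rfl,
        ← IsScalarTower.algebraMap_apply ℤ R F]
      exact S.algebraMap_mem a
    | add p q hp hq => rw [map_add]; exact add_mem hp hq
    | mul_X p s hp =>
      rw [map_mul]
      exact mul_mem hp (by rw [← hx s]; exact hmemx s)
  have hmeminv : (φ gR)⁻¹ ∈ S := by
    have hgval : φ gR = lam * mu * (Y 0 * Y 1) := by
      rw [hgR, map_mul, map_mul, map_mul, ← hlam', ← hmu', hXU, hXV,
        hY 0, hY 1]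
      congr 2 <;> exact (hx _).symm
    rw [hgval, mul_inv, mul_inv, mul_inv]
    refine mul_mem (mul_mem ?_ ?_) (mul_mem ?_ ?_)
    · exact Algebra.subset_adjoin (by simp [hG])
    · exact Algebra.subset_adjoin (by simp [hG])
    · exact Algebra.subset_adjoin (Set.mem_union_left _ (Set.mem_union_left _
        (Set.mem_union_left _ (Set.mem_union_right _ ⟨0, rfl⟩))))
    · exact Algebra.subset_adjoin (Set.mem_union_left _ (Set.mem_union_left _
        (Set.mem_union_left _ (Set.mem_union_right _ ⟨1, rfl⟩))))
  have hyk : y k = φ p * ((φ gR)⁻¹) ^ t := by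
    rw [inv_pow, eq_comm, mul_comm, inv_mul_eq_iff_eq_mul₀ (pow_ne_zero t hgf), mul_comm]
    exact hpt.symm
  rw [hyk]
  exact mul_mem (hmemp p) (pow_mem hmeminv t)
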